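/- arXiv:2308.00416 — 5 statements merged into one kernel-verified Lean document; each statement's English description precedes it below -/
import Mathlib

section
/- Let p₀ : ℝ → ℝ be bounded and measurable and σ > 0. Define g(t,ξ) = ((p₀(ξ) + √σ p₀(-√σ ξ))/(1+√σ)) · e^{-ξ²/(4t)}/√(πt). Then h(t) = ∫₀^∞ g(t,ξ) dξ is continuously differentiable on (0,∞), and h'(t) = ∫₀^∞ ((p₀(ξ) + √σ p₀(-√σ ξ))/(1+√σ)) · (ξ²/(4t²) - 1/(2t)) · e^{-ξ²/(4t)}/√(πt) dξ. -/
open Real MeasureTheory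

lemma kernel_deriv (ξ t : ℝ) (ht : 0 < t) :
    HasDerivAt (fun t => Real.exp (-ξ ^ 2 / (4 * t)) / Real.sqrt (π * t))
      ((ξ ^ 2 / (4 * t ^ 2) - 1 / (2 * t)) * (Real.exp (-ξ ^ 2 / (4 * t)) / Real.sqrt (π * t))) t := by
  have hπt : 0 < π * t := mul_pos Real.pi_pos ht
  have h1 : HasDerivAt (fun t : ℝ => -ξ ^ 2 / (4 * t)) (ξ ^ 2 / (4 * t ^ 2)) t := by
    have h0 : HasDerivAt (fun t : ℝ => (-ξ ^ 2 / 4) * t⁻¹) ((-ξ ^ 2 / 4) * (-(t ^ 2)⁻¹)) t :=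
      (hasDerivAt_inv ht.ne').const_mul _
    convert h0 using 1
    · funext s
      rw [div_eq_mul_inv, mul_inv]
      ring
    · field_simp
  have hexp := h1.exp
  have h2 : HasDerivAt (fun t : ℝ => Real.sqrt (π * t)) (π / (2 * Real.sqrt (π * t))) t := by
    have hin : HasDerivAt (fun t : ℝ => π * t) π t := by
      simpa using (hasDerivAt_id t).const_mul π
    have := (Real.hasDerivAt_sqrt hπt.ne').comp t hin
    convert! this using 1
    ring
  have hden : Real.sqrt (π * t) ≠ 0 := (Real.sqrt_pos.mpr hπt).ne'
  have hdiv := hexp.div h2 hden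
  have hsq : Real.sqrt (π * t) ^ 2 = π * t := Real.sq_sqrt hπt.le
  rw [hsq] at hdiv
  convert! hdiv using 1
  set s := Real.sqrt (π * t) with hs
  field_simp
  linear_combination (-2 * ξ ^ 2) * hsq

lemma integrable_B (M a b : ℝ) (ha : 0 < a) (hb : 0 < b) :
    Integrable (fun ξ : ℝ =>
      M * ((ξ ^ 2 / (4 * a ^ 2) + 1 / (2 * a)) * (Real.exp (-ξ ^ 2 / (4 * b)) / Real.sqrt (π * a)))) := by
  have hb' : 0 < 1 / (4 * b) := by positivity
  have h2 : Integrable (fun ξ : ℝ => ξ ^ 2 * Real.exp (-(1 / (4 * b)) * ξ ^ 2)) := by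
    have h := integrable_rpow_mul_exp_neg_mul_sq hb' (show (-1 : ℝ) < 2 by norm_num)
    have heq : (fun x : ℝ => x ^ (2 : ℝ) * Real.exp (-(1 / (4 * b)) * x ^ 2)) =
        fun x : ℝ => x ^ 2 * Real.exp (-(1 / (4 * b)) * x ^ 2) := by
      funext x
      rw [show (2 : ℝ) = ((2 : ℕ) : ℝ) by norm_num, Real.rpow_natCast]
    rwa [heq] at h
  have h1 : Integrable (fun ξ : ℝ => Real.exp (-(1 / (4 * b)) * ξ ^ 2)) :=
    integrable_exp_neg_mul_sq hb'
  have hs : Real.sqrt (π * a) ≠ 0 := (Real.sqrt_pos.mpr (by positivity)).ne'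
  have heq : (fun ξ : ℝ =>
      M * ((ξ ^ 2 / (4 * a ^ 2) + 1 / (2 * a)) * (Real.exp (-ξ ^ 2 / (4 * b)) / Real.sqrt (π * a)))) =
      fun ξ : ℝ => M / (4 * a ^ 2 * Real.sqrt (π * a)) * (ξ ^ 2 * Real.exp (-(1 / (4 * b)) * ξ ^ 2)) +
        M / (2 * a * Real.sqrt (π * a)) * Real.exp (-(1 / (4 * b)) * ξ ^ 2) := by
    funext ξ
    rw [show -ξ ^ 2 / (4 * b) = -(1 / (4 * b)) * ξ ^ 2 by ring]
    field_simp
  rw [heq]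
  exact (h2.const_mul _).add (h1.const_mul _)

lemma G'_bound (M : ℝ) (q : ℝ → ℝ) (hq : ∀ x, |q x| ≤ M) (a b t ξ : ℝ)
    (ha : 0 < a) (hat : a ≤ t) (htb : t ≤ b) :
    ‖q ξ * ((ξ ^ 2 / (4 * t ^ 2) - 1 / (2 * t)) * (Real.exp (-ξ ^ 2 / (4 * t)) / Real.sqrt (π * t)))‖ ≤
      M * ((ξ ^ 2 / (4 * a ^ 2) + 1 / (2 * a)) * (Real.exp (-ξ ^ 2 / (4 * b)) / Real.sqrt (π * a))) := by
  have ht : 0 < t := ha.trans_le hat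
  have hb : 0 < b := ht.trans_le htb
  have hM0 : 0 ≤ M := le_trans (abs_nonneg _) (hq 0)
  rw [Real.norm_eq_abs, abs_mul, abs_mul]
  have e2 : |ξ ^ 2 / (4 * t ^ 2) - 1 / (2 * t)| ≤ ξ ^ 2 / (4 * a ^ 2) + 1 / (2 * a) := by
    refine (abs_sub _ _).trans ?_
    rw [abs_of_nonneg (by positivity), abs_of_nonneg (by positivity)]
    gcongr
  have e3 : |Real.exp (-ξ ^ 2 / (4 * t)) / Real.sqrt (π * t)| ≤
      Real.exp (-ξ ^ 2 / (4 * b)) / Real.sqrt (π * a) := by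
    rw [abs_of_pos (by positivity)]
    have hnum : Real.exp (-ξ ^ 2 / (4 * t)) ≤ Real.exp (-ξ ^ 2 / (4 * b)) := by
      apply Real.exp_le_exp.mpr
      rw [neg_div, neg_div, neg_le_neg_iff]
      exact div_le_div_of_nonneg_left (sq_nonneg ξ) (by positivity) (by linarith)
    have hden : Real.sqrt (π * a) ≤ Real.sqrt (π * t) :=
      Real.sqrt_le_sqrt (by nlinarith [Real.pi_pos])
    exact div_le_div₀ (Real.exp_pos _).le hnum (Real.sqrt_pos.mpr (by positivity)) hden
  have := mul_le_mul (hq ξ) (mul_le_mul e2 e3 (abs_nonneg _) (by positivity))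
    (by positivity) hM0
  exact this

theorem stmt1 (p0 : ℝ → ℝ) (hm : Measurable p0) (M : ℝ) (hM : ∀ x, |p0 x| ≤ M)
    (σ : ℝ) (hσ : 0 < σ)
    (h : ℝ → ℝ)
    (hh : ∀ t, h t = ∫ ξ in Set.Ioi (0:ℝ),
        ((p0 ξ + Real.sqrt σ * p0 (-Real.sqrt σ * ξ)) / (1 + Real.sqrt σ)) *
          (Real.exp (-ξ ^ 2 / (4 * t)) / Real.sqrt (π * t)))
    (F : ℝ → ℝ)
    (hF : ∀ t, F t = ∫ ξ in Set.Ioi (0:ℝ),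
        ((p0 ξ + Real.sqrt σ * p0 (-Real.sqrt σ * ξ)) / (1 + Real.sqrt σ)) *
          ((ξ ^ 2 / (4 * t ^ 2) - 1 / (2 * t)) * (Real.exp (-ξ ^ 2 / (4 * t)) / Real.sqrt (π * t)))) :
    (∀ t ∈ Set.Ioi (0:ℝ), HasDerivAt h (F t) t) ∧ ContinuousOn F (Set.Ioi 0) := by
  set q : ℝ → ℝ := fun ξ => (p0 ξ + Real.sqrt σ * p0 (-Real.sqrt σ * ξ)) / (1 + Real.sqrt σ) with hqdef
  have hσ' : 0 < Real.sqrt σ := Real.sqrt_pos.mpr hσ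
  have h1σ : 0 < 1 + Real.sqrt σ := by linarith
  have hM0 : 0 ≤ M := le_trans (abs_nonneg _) (hM 0)
  have hqM : ∀ x, |q x| ≤ M := by
    intro x
    rw [hqdef]
    simp only
    rw [abs_div, abs_of_pos h1σ, div_le_iff₀ h1σ]
    calc |p0 x + Real.sqrt σ * p0 (-Real.sqrt σ * x)|
        ≤ |p0 x| + |Real.sqrt σ * p0 (-Real.sqrt σ * x)| := abs_add_le _ _
      _ ≤ M + Real.sqrt σ * M := by
          refine add_le_add (hM x) ?_
          rw [abs_mul, abs_of_pos hσ']
          exact mul_le_mul_of_nonneg_left (hM _) hσ'.le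
      _ = M * (1 + Real.sqrt σ) := by ring
  have hqm : Measurable q := by
    apply Measurable.div_const
    exact hm.add ((hm.comp (measurable_id.const_mul (-Real.sqrt σ))).const_mul _)
  -- measurability of the integrands
  have hmeasG : ∀ t : ℝ, AEStronglyMeasurable
      (fun ξ => q ξ * (Real.exp (-ξ ^ 2 / (4 * t)) / Real.sqrt (π * t)))
      (volume.restrict (Set.Ioi (0:ℝ))) := by
    intro t
    exact (hqm.mul (((continuous_pow 2).neg.div_const _).rexp.div_const _).measurable).aestronglyMeasurable
  have hmeasG' : ∀ t : ℝ, AEStronglyMeasurable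
      (fun ξ => q ξ * ((ξ ^ 2 / (4 * t ^ 2) - 1 / (2 * t)) *
        (Real.exp (-ξ ^ 2 / (4 * t)) / Real.sqrt (π * t))))
      (volume.restrict (Set.Ioi (0:ℝ))) := by
    intro t
    refine (hqm.mul ?_).aestronglyMeasurable
    exact ((((continuous_pow 2).div_const _).sub continuous_const).mul
      (((continuous_pow 2).neg.div_const _).rexp.div_const _)).measurable
  -- integrability of the h-integrand at positive t
  have hintG : ∀ t : ℝ, 0 < t → Integrable
      (fun ξ => q ξ * (Real.exp (-ξ ^ 2 / (4 * t)) / Real.sqrt (π * t)))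
      (volume.restrict (Set.Ioi (0:ℝ))) := by
    intro t ht
    have hb' : 0 < 1 / (4 * t) := by positivity
    have hint : Integrable (fun ξ : ℝ => M * (Real.exp (-(1 / (4 * t)) * ξ ^ 2) / Real.sqrt (π * t))) :=
      ((integrable_exp_neg_mul_sq hb').div_const _).const_mul _
    refine Integrable.mono' hint.integrableOn (hmeasG t) (ae_of_all _ fun ξ => ?_)
    rw [Real.norm_eq_abs, abs_mul, abs_of_pos (by positivity : (0:ℝ) <
      Real.exp (-ξ ^ 2 / (4 * t)) / Real.sqrt (π * t))]
    rw [show -(1 / (4 * t)) * ξ ^ 2 = -ξ ^ 2 / (4 * t) by ring]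
    exact mul_le_mul_of_nonneg_right (hqM ξ) (by positivity)
  constructor
  · intro t ht
    rw [Set.mem_Ioi] at ht
    have hballpos : ∀ s ∈ Metric.ball t (t / 2), t / 2 ≤ s ∧ s ≤ t + t / 2 := by
      intro s hs
      rw [Metric.mem_ball, Real.dist_eq, abs_sub_lt_iff] at hs
      constructor <;> linarith [hs.1, hs.2]
    have key := hasDerivAt_integral_of_dominated_loc_of_deriv_le
      (μ := volume.restrict (Set.Ioi (0:ℝ)))
      (F := fun s ξ => q ξ * (Real.exp (-ξ ^ 2 / (4 * s)) / Real.sqrt (π * s)))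
      (F' := fun s ξ => q ξ * ((ξ ^ 2 / (4 * s ^ 2) - 1 / (2 * s)) *
        (Real.exp (-ξ ^ 2 / (4 * s)) / Real.sqrt (π * s))))
      (x₀ := t)
      (bound := fun ξ => M * ((ξ ^ 2 / (4 * (t / 2) ^ 2) + 1 / (2 * (t / 2))) *
        (Real.exp (-ξ ^ 2 / (4 * (t + t / 2))) / Real.sqrt (π * (t / 2)))))
      (Metric.ball_mem_nhds t (by positivity : (0:ℝ) < t / 2))
      (Filter.Eventually.of_forall fun s => hmeasG s)
      (hintG t ht)
      (hmeasG' t)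
      (ae_of_all _ fun ξ s hs => by
        obtain ⟨h1, h2⟩ := hballpos s hs
        exact G'_bound M q hqM (t / 2) (t + t / 2) s ξ (by positivity) h1 h2)
      (integrable_B M (t / 2) (t + t / 2) (by positivity) (by positivity)).integrableOn
      (ae_of_all _ fun ξ s hs => by
        obtain ⟨h1, h2⟩ := hballpos s hs
        exact (kernel_deriv ξ s (by linarith : 0 < s)).const_mul (q ξ))
    have hfun : h = fun s => ∫ ξ in Set.Ioi (0:ℝ),
        q ξ * (Real.exp (-ξ ^ 2 / (4 * s)) / Real.sqrt (π * s)) := by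
      funext s
      rw [hh s]
    rw [hfun, hF]
    exact key.2
  · intro t ht
    rw [Set.mem_Ioi] at ht
    have hFfun : F = fun s => ∫ ξ in Set.Ioi (0:ℝ),
        q ξ * ((ξ ^ 2 / (4 * s ^ 2) - 1 / (2 * s)) *
          (Real.exp (-ξ ^ 2 / (4 * s)) / Real.sqrt (π * s))) := by
      funext s
      rw [hF s]
    rw [hFfun]
    refine ContinuousAt.continuousWithinAt ?_
    refine continuousAt_of_dominated (Filter.Eventually.of_forall fun s => hmeasG' s)
      ?_ (integrable_B M (t / 2) (t + t / 2) (by positivity) (by positivity)).integrableOn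
      (ae_of_all _ fun ξ => ?_)
    · filter_upwards [Metric.ball_mem_nhds t (by positivity : (0:ℝ) < t / 2)] with s hs
      rw [Metric.mem_ball, Real.dist_eq, abs_sub_lt_iff] at hs
      exact ae_of_all _ fun ξ =>
        G'_bound M q hqM (t / 2) (t + t / 2) s ξ (by positivity)
          (by linarith [hs.1, hs.2]) (by linarith [hs.1, hs.2])
    · have h4t : (4 : ℝ) * t ^ 2 ≠ 0 := by positivity
      have h2t : (2 : ℝ) * t ≠ 0 := by positivity
      have hsq : Real.sqrt (π * t) ≠ 0 := (Real.sqrt_pos.mpr (by positivity)).ne'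
      have c1 : ContinuousAt (fun s : ℝ => 4 * s ^ 2) t := by fun_prop
      have c2 : ContinuousAt (fun s : ℝ => 2 * s) t := by fun_prop
      have c3 : ContinuousAt (fun s : ℝ => 4 * s) t := by fun_prop
      have h4t' : (4 : ℝ) * t ≠ 0 := by positivity
      refine continuousAt_const.mul (ContinuousAt.mul ?_ ?_)
      · exact (continuousAt_const.div c1 h4t).sub (continuousAt_const.div c2 h2t)
      · exact ContinuousAt.div
          ((Real.continuous_exp.continuousAt).comp (continuousAt_const.div c3 h4t'))
          ((Real.continuous_sqrt.comp (continuous_const.mul continuous_id)).continuousAt) hsq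
end

section
/- For t > 0, x₀ > 0, and σ > 0, the fundamental solution p(t,y) = (1/(2√(πt))) e^{-(y-x₀)²/(4t)} + ((1-√σ)/(2(1+√σ)))(1/√(πt)) e^{-(y+x₀)²/(4t)} for y > 0 and p(t,y) = (1/((1+√σ)√(πt))) e^{-(x₀ - y/√σ)²/(4t)} for y < 0 satisfies the flux matching condition σ · ∂_y p(t, 0⁻) = ∂_y p(t, 0⁺). -/
open Real

theorem stmt3 (t x₀ σ : ℝ) (ht : 0 < t) (hx₀ : 0 < x₀) (hσ : 0 < σ) :
    σ * deriv (fun y : ℝ =>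
        (1 / ((1 + Real.sqrt σ) * Real.sqrt (π * t))) *
          Real.exp (-(x₀ - y / Real.sqrt σ) ^ 2 / (4 * t))) 0
      = deriv (fun y : ℝ =>
        (1 / (2 * Real.sqrt (π * t))) * Real.exp (-(y - x₀) ^ 2 / (4 * t)) +
          ((1 - Real.sqrt σ) / (2 * (1 + Real.sqrt σ))) * (1 / Real.sqrt (π * t)) *
            Real.exp (-(y + x₀) ^ 2 / (4 * t))) 0 := by
  set s := Real.sqrt σ with hs_def
  have hs : 0 < s := Real.sqrt_pos.2 hσ
  have hs2 : s ^ 2 = σ := Real.sq_sqrt hσ.le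
  have hpt : 0 < Real.sqrt (π * t) := Real.sqrt_pos.2 (mul_pos Real.pi_pos ht)
  have hg1 : HasDerivAt (fun y : ℝ => -(x₀ - y / s) ^ 2 / (4 * t)) (x₀ / (2 * t * s)) 0 := by
    have h : HasDerivAt (fun y : ℝ => x₀ - y / s) (-(1 / s)) 0 := by
      simpa using ((hasDerivAt_id (0:ℝ)).div_const s).const_sub x₀
    have := ((h.fun_pow 2).fun_neg).div_const (4 * t)
    convert this using 1
    · rfl
    · rfl
    simp only [zero_div, sub_zero]
    field_simp
    ring
  have hg2 : HasDerivAt (fun y : ℝ => -(y - x₀) ^ 2 / (4 * t)) (x₀ / (2 * t)) 0 := by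
    have h : HasDerivAt (fun y : ℝ => y - x₀) 1 0 := (hasDerivAt_id (0:ℝ)).sub_const x₀
    have := ((h.fun_pow 2).fun_neg).div_const (4 * t)
    convert this using 1
    · rfl
    · rfl
    field_simp
    ring
  have hg3 : HasDerivAt (fun y : ℝ => -(y + x₀) ^ 2 / (4 * t)) (-x₀ / (2 * t)) 0 := by
    have h : HasDerivAt (fun y : ℝ => y + x₀) 1 0 := (hasDerivAt_id (0:ℝ)).add_const x₀
    have := ((h.fun_pow 2).fun_neg).div_const (4 * t)
    convert this using 1
    · rfl
    · rfl
    field_simp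
    ring
  have h1 := (hg1.exp).const_mul (1 / ((1 + s) * Real.sqrt (π * t)))
  have h2 := (hg2.exp).const_mul (1 / (2 * Real.sqrt (π * t)))
  have h3 := (hg3.exp).const_mul (((1 - s) / (2 * (1 + s))) * (1 / Real.sqrt (π * t)))
  have h3' : HasDerivAt (fun y : ℝ => ((1 - s) / (2 * (1 + s))) * (1 / Real.sqrt (π * t)) *
      Real.exp (-(y + x₀) ^ 2 / (4 * t)))
      (((1 - s) / (2 * (1 + s))) * (1 / Real.sqrt (π * t)) *
        (Real.exp (-(0 + x₀) ^ 2 / (4 * t)) * (-x₀ / (2 * t)))) 0 := by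
    exact h3
  rw [h1.deriv, (h2.fun_add h3').deriv]
  have e1 : -(x₀ - 0 / s) ^ 2 / (4 * t) = -x₀ ^ 2 / (4 * t) := by rw [zero_div, sub_zero]
  have e2 : -((0:ℝ) - x₀) ^ 2 / (4 * t) = -x₀ ^ 2 / (4 * t) := by ring_nf
  have e3 : -((0:ℝ) + x₀) ^ 2 / (4 * t) = -x₀ ^ 2 / (4 * t) := by ring_nf
  rw [e1, e2, e3]
  set E := Real.exp (-x₀ ^ 2 / (4 * t)) with hE
  have h1s : (0:ℝ) < 1 + s := by linarith
  rw [← hs2]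
  field_simp
  ring
end

section
/- For t > 0 and bounded measurable φ : (0,∞) → ℝ, the Dirichlet heat kernel on the half line, Φ(t,x,ξ) = (1/(2√(πt)))(e^{-(x-ξ)²/(4t)} - e^{-(x+ξ)²/(4t)}), satisfies lim_{x→0⁺} ∂_x ∫₀^∞ φ(ξ) Φ(t,x,ξ) dξ = ∫₀^∞ φ(ξ) · (ξ/(2√(πt³))) e^{-ξ²/(4t)} dξ. -/
open Real MeasureTheory Filter Topology

lemma aux1 (c : ℝ) (hc : 0 < c) (u : ℝ) : |u| * Real.exp (-u^2/c) ≤ Real.sqrt c := by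
  have h1 : |u| ≤ Real.sqrt c * Real.exp (u^2/c) := by
    have hs : Real.sqrt c ^ 2 = c := Real.sq_sqrt hc.le
    have h2 : |u| ≤ Real.sqrt c * (u^2/c + 1) := by
      rw [mul_add, mul_one, ← mul_div_assoc, div_add' _ _ _ hc.ne', le_div_iff₀ hc]
      nlinarith [mul_nonneg (Real.sqrt_nonneg c) (sq_nonneg (Real.sqrt c - |u|)), sq_abs u,
        Real.sqrt_nonneg c, abs_nonneg u]
    calc |u| ≤ Real.sqrt c * (u^2/c + 1) := h2
      _ ≤ Real.sqrt c * Real.exp (u^2/c) :=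
        mul_le_mul_of_nonneg_left (Real.add_one_le_exp _) (Real.sqrt_nonneg c)
  calc |u| * Real.exp (-u^2/c) ≤ (Real.sqrt c * Real.exp (u^2/c)) * Real.exp (-u^2/c) :=
        mul_le_mul_of_nonneg_right h1 (Real.exp_pos _).le
    _ = Real.sqrt c := by rw [mul_assoc, ← Real.exp_add]; ring_nf; simp

lemma exp_eighth (t : ℝ) (ht : 0 < t) (ξ u : ℝ) (hu : ξ^2/2 - 4 ≤ u^2) :
    Real.exp (-u^2/(8*t)) ≤ Real.exp (1/(2*t)) * Real.exp (-ξ^2/(16*t)) := by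
  rw [← Real.exp_add]
  apply Real.exp_le_exp.2
  rw [div_le_iff₀ (by positivity : (0:ℝ) < 8*t)]
  have ht' : t ≠ 0 := ht.ne'
  have : (1/(2*t) + -ξ^2/(16*t)) * (8*t) = 4 - ξ^2/2 := by field_simp; ring
  rw [this]; linarith

lemma exp_quarter (t : ℝ) (ht : 0 < t) (ξ u : ℝ) (hu : ξ^2/2 - 4 ≤ u^2) :
    Real.exp (-u^2/(4*t)) ≤ Real.exp (1/t) * Real.exp (-ξ^2/(16*t)) := by
  rw [← Real.exp_add]
  apply Real.exp_le_exp.2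
  rw [div_le_iff₀ (by positivity : (0:ℝ) < 4*t)]
  have ht' : t ≠ 0 := ht.ne'
  have h : (1/t + -ξ^2/(16*t)) * (4*t) = 4 - ξ^2/4 := by field_simp; ring
  rw [h]; nlinarith [sq_nonneg ξ]

lemma key_bound (t : ℝ) (ht : 0 < t) (ξ u : ℝ) (hu : ξ^2/2 - 4 ≤ u^2) :
    |u| * Real.exp (-u^2/(4*t)) ≤ Real.sqrt (8*t) * Real.exp (1/(2*t)) * Real.exp (-ξ^2/(16*t)) := by
  have hsplit : Real.exp (-u^2/(4*t)) = Real.exp (-u^2/(8*t)) * Real.exp (-u^2/(8*t)) := by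
    rw [← Real.exp_add]; congr 1; ring
  rw [hsplit, ← mul_assoc]
  calc |u| * Real.exp (-u^2/(8*t)) * Real.exp (-u^2/(8*t))
      ≤ Real.sqrt (8*t) * (Real.exp (1/(2*t)) * Real.exp (-ξ^2/(16*t))) := by
        apply mul_le_mul (aux1 (8*t) (by positivity) u) (exp_eighth t ht ξ u hu)
          (Real.exp_pos _).le (Real.sqrt_nonneg _)
    _ = Real.sqrt (8*t) * Real.exp (1/(2*t)) * Real.exp (-ξ^2/(16*t)) := by ring

set_option maxHeartbeats 1000000 in
theorem stmt12 (t : ℝ) (ht : 0 < t) (φ : ℝ → ℝ) (hm : Measurable φ)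
    (M : ℝ) (hbdd : ∀ ξ ∈ Set.Ioi (0:ℝ), |φ ξ| ≤ M) :
    Tendsto (fun x : ℝ =>
        deriv (fun x' : ℝ =>
          ∫ ξ in Set.Ioi (0:ℝ), φ ξ *
            ((1 / (2 * Real.sqrt (π * t))) *
              (Real.exp (-(x' - ξ) ^ 2 / (4 * t)) - Real.exp (-(x' + ξ) ^ 2 / (4 * t))))) x)
      (𝓝[>] 0)
      (𝓝 (∫ ξ in Set.Ioi (0:ℝ),
        φ ξ * ((ξ / (2 * Real.sqrt (π * t ^ 3))) * Real.exp (-ξ ^ 2 / (4 * t))))) := by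
  have hM : 0 ≤ M := le_trans (abs_nonneg _) (hbdd 1 (Set.mem_Ioi.mpr one_pos))
  have hπt : (0:ℝ) < π * t := by positivity
  have hs : 0 < Real.sqrt (π * t) := Real.sqrt_pos.2 hπt
  set c : ℝ := 1 / (2 * Real.sqrt (π * t)) with hc_def
  have hc : 0 < c := by positivity
  -- the derivative-in-x integrand
  set D : ℝ → ℝ → ℝ := fun x ξ => φ ξ * (c *
      (Real.exp (-(x - ξ) ^ 2 / (4 * t)) * (-(x - ξ) / (2 * t)) -
       Real.exp (-(x + ξ) ^ 2 / (4 * t)) * (-(x + ξ) / (2 * t)))) with hD_def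
  -- pointwise derivative
  have hderiv_pt : ∀ (ξ x : ℝ), HasDerivAt (fun x' : ℝ => φ ξ *
      (c * (Real.exp (-(x' - ξ) ^ 2 / (4 * t)) - Real.exp (-(x' + ξ) ^ 2 / (4 * t)))))
      (D x ξ) x := by
    intro ξ x
    have h1 : HasDerivAt (fun x' : ℝ => -(x' - ξ) ^ 2 / (4 * t)) (-(x - ξ) / (2 * t)) x := by
      have := (((hasDerivAt_id x).sub_const ξ).pow 2).neg.div_const (4 * t)
      refine this.congr_deriv ?_
      have ht' : t ≠ 0 := ht.ne'
      simp only [id_eq]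
      field_simp
      ring
    have h2 : HasDerivAt (fun x' : ℝ => -(x' + ξ) ^ 2 / (4 * t)) (-(x + ξ) / (2 * t)) x := by
      have := (((hasDerivAt_id x).add_const ξ).pow 2).neg.div_const (4 * t)
      refine this.congr_deriv ?_
      have ht' : t ≠ 0 := ht.ne'
      simp only [id_eq]
      field_simp
      ring
    exact ((h1.exp.sub h2.exp).const_mul c).const_mul (φ ξ)
  -- bound
  set bound : ℝ → ℝ := fun ξ => M * c * (Real.sqrt (8*t) * Real.exp (1/(2*t))) / t *
      Real.exp (-ξ^2/(16*t)) with hbound_def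
  have hbound_int : Integrable bound (volume.restrict (Set.Ioi (0:ℝ))) := by
    have h1 : Integrable (fun ξ : ℝ => Real.exp (-(1/(16*t)) * ξ^2)) volume :=
      integrable_exp_neg_mul_sq (by positivity)
    have h2 := (h1.const_mul (M * c * (Real.sqrt (8*t) * Real.exp (1/(2*t))) / t)).restrict
      (s := Set.Ioi (0:ℝ))
    apply h2.congr
    filter_upwards with ξ
    rw [hbound_def]
    congr 1
    congr 1
    ring
  -- domination for |x| < 2
  have hDbound : ∀ x : ℝ, |x| ≤ 2 → ∀ ξ ∈ Set.Ioi (0:ℝ), ‖D x ξ‖ ≤ bound ξ := by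
    intro x hx ξ _
    have hx2 : x^2 ≤ 4 := by nlinarith [abs_nonneg x, sq_abs x, abs_le.mp hx]
    have hu1 : ξ^2/2 - 4 ≤ (x - ξ)^2 := by nlinarith [sq_nonneg (2*x - ξ)]
    have hu2 : ξ^2/2 - 4 ≤ (x + ξ)^2 := by nlinarith [sq_nonneg (2*x + ξ)]
    have hk1 := key_bound t ht ξ (x - ξ) hu1
    have hk2 := key_bound t ht ξ (x + ξ) hu2
    have hφ : |φ ξ| ≤ M := hbdd ξ (by assumption)
    rw [hD_def]
    simp only [Real.norm_eq_abs]
    set S : ℝ := Real.sqrt (8*t) * Real.exp (1/(2*t)) * Real.exp (-ξ^2/(16*t)) with hS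
    have hS0 : 0 ≤ S := by positivity
    calc |φ ξ * (c * (Real.exp (-(x - ξ) ^ 2 / (4 * t)) * (-(x - ξ) / (2 * t)) -
              Real.exp (-(x + ξ) ^ 2 / (4 * t)) * (-(x + ξ) / (2 * t))))|
        = |φ ξ| * (c * |Real.exp (-(x - ξ) ^ 2 / (4 * t)) * (-(x - ξ) / (2 * t)) -
              Real.exp (-(x + ξ) ^ 2 / (4 * t)) * (-(x + ξ) / (2 * t))|) := by
          rw [abs_mul, abs_mul, abs_of_pos hc]
      _ ≤ M * (c * (S / (2*t) + S / (2*t))) := by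
          apply mul_le_mul hφ _ (by positivity) hM
          apply mul_le_mul_of_nonneg_left _ hc.le
          refine (abs_sub _ _).trans ?_
          have e1 : |Real.exp (-(x - ξ) ^ 2 / (4 * t)) * (-(x - ξ) / (2 * t))| ≤ S / (2*t) := by
            rw [abs_mul, abs_div, abs_neg, abs_of_pos (by positivity : (0:ℝ) < 2*t),
              abs_of_pos (Real.exp_pos _)]
            rw [show Real.exp (-(x - ξ) ^ 2 / (4 * t)) * (|x - ξ| / (2*t)) =
              (|x - ξ| * Real.exp (-(x - ξ) ^ 2 / (4 * t))) / (2*t) by ring]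
            gcongr
          have e2 : |Real.exp (-(x + ξ) ^ 2 / (4 * t)) * (-(x + ξ) / (2 * t))| ≤ S / (2*t) := by
            rw [abs_mul, abs_div, abs_neg, abs_of_pos (by positivity : (0:ℝ) < 2*t),
              abs_of_pos (Real.exp_pos _)]
            rw [show Real.exp (-(x + ξ) ^ 2 / (4 * t)) * (|x + ξ| / (2*t)) =
              (|x + ξ| * Real.exp (-(x + ξ) ^ 2 / (4 * t))) / (2*t) by ring]
            gcongr
          linarith [e1, e2]
      _ = bound ξ := by
          rw [hbound_def, hS]
          have ht' : t ≠ 0 := ht.ne'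
          field_simp
          ring
  -- measurability of D x
  have hDmeas : ∀ x : ℝ, AEStronglyMeasurable (D x) (volume.restrict (Set.Ioi (0:ℝ))) := by
    intro x
    apply Measurable.aestronglyMeasurable
    apply hm.mul
    fun_prop
  -- integrability of F x for |x| ≤ 2
  have hFint : ∀ x : ℝ, |x| ≤ 2 → Integrable (fun ξ => φ ξ *
      (c * (Real.exp (-(x - ξ) ^ 2 / (4 * t)) - Real.exp (-(x + ξ) ^ 2 / (4 * t)))))
      (volume.restrict (Set.Ioi (0:ℝ))) := by
    intro x hx
    have hx2 : x^2 ≤ 4 := by nlinarith [abs_nonneg x, sq_abs x, abs_le.mp hx]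
    have h1 : Integrable (fun ξ : ℝ => Real.exp (-(1/(16*t)) * ξ^2)) volume :=
      integrable_exp_neg_mul_sq (by positivity)
    have h2 := ((h1.const_mul (M * c * 2 * Real.exp (1/t))).restrict (s := Set.Ioi (0:ℝ)))
    apply Integrable.mono h2
    · apply Measurable.aestronglyMeasurable
      apply hm.mul
      fun_prop
    · filter_upwards [ae_restrict_mem measurableSet_Ioi] with ξ hξ
      have hφ : |φ ξ| ≤ M := hbdd ξ hξ
      have hu1 : ξ^2/2 - 4 ≤ (x - ξ)^2 := by nlinarith [sq_nonneg (2*x - ξ)]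
      have hu2 : ξ^2/2 - 4 ≤ (x + ξ)^2 := by nlinarith [sq_nonneg (2*x + ξ)]
      have hq1 := exp_quarter t ht ξ (x - ξ) hu1
      have hq2 := exp_quarter t ht ξ (x + ξ) hu2
      simp only [Real.norm_eq_abs]
      have hE : -(1/(16*t)) * ξ^2 = -ξ^2/(16*t) := by ring
      rw [abs_mul, abs_mul, abs_of_pos hc, hE]
      rw [abs_of_nonneg (by positivity : (0:ℝ) ≤ M * c * 2 * Real.exp (1/t) * Real.exp (-ξ^2/(16*t)))]
      calc |φ ξ| * (c * |Real.exp (-(x - ξ) ^ 2 / (4 * t)) - Real.exp (-(x + ξ) ^ 2 / (4 * t))|)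
          ≤ M * (c * (2 * (Real.exp (1/t) * Real.exp (-ξ^2/(16*t))))) := by
            apply mul_le_mul hφ _ (by positivity) hM
            apply mul_le_mul_of_nonneg_left _ hc.le
            refine (abs_sub _ _).trans ?_
            rw [abs_of_pos (Real.exp_pos _), abs_of_pos (Real.exp_pos _)]
            linarith
        _ = M * c * 2 * Real.exp (1/t) * Real.exp (-ξ^2/(16*t)) := by ring
  -- derivative of the integral, for |x₀| ≤ 1
  have hDERIV : ∀ x₀ : ℝ, |x₀| ≤ 1 → HasDerivAt (fun x' : ℝ =>
      ∫ ξ in Set.Ioi (0:ℝ), φ ξ *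
        ((1 / (2 * Real.sqrt (π * t))) *
          (Real.exp (-(x' - ξ) ^ 2 / (4 * t)) - Real.exp (-(x' + ξ) ^ 2 / (4 * t)))))
      (∫ ξ in Set.Ioi (0:ℝ), D x₀ ξ) x₀ := by
    intro x₀ hx₀
    have key := hasDerivAt_integral_of_dominated_loc_of_deriv_le (F := fun x ξ =>
        φ ξ * (c * (Real.exp (-(x - ξ) ^ 2 / (4 * t)) - Real.exp (-(x + ξ) ^ 2 / (4 * t)))))
        (F' := D) (x₀ := x₀) (s := Metric.ball x₀ 1) (μ := volume.restrict (Set.Ioi (0:ℝ)))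
        (bound := bound) (Metric.ball_mem_nhds x₀ one_pos)
        (Filter.Eventually.of_forall fun x => by
          apply Measurable.aestronglyMeasurable; apply hm.mul; fun_prop)
        (hFint x₀ (by linarith))
        (hDmeas x₀)
        (by
          filter_upwards [ae_restrict_mem measurableSet_Ioi] with ξ hξ
          intro x hxball
          have : |x| ≤ 2 := by
            have := Metric.mem_ball.mp hxball
            rw [Real.dist_eq] at this
            have := abs_sub_abs_le_abs_sub x x₀
            linarith
          exact hDbound x this ξ hξ)
        hbound_int
        (Filter.Eventually.of_forall fun ξ => fun x _ => hderiv_pt ξ x)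
    exact key.2
  -- continuity of x ↦ ∫ D x ξ at 0
  have hCONT : ContinuousAt (fun x : ℝ => ∫ ξ in Set.Ioi (0:ℝ), D x ξ) 0 := by
    apply continuousAt_of_dominated (bound := bound)
    · exact Filter.Eventually.of_forall hDmeas
    · filter_upwards [Metric.ball_mem_nhds (0:ℝ) one_pos] with x hx
      filter_upwards [ae_restrict_mem measurableSet_Ioi] with ξ hξ
      have hx2 : |x| ≤ 2 := by
        have := Metric.mem_ball.mp hx
        rw [Real.dist_eq, sub_zero] at this
        linarith
      exact hDbound x hx2 ξ hξ
    · exact hbound_int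
    · filter_upwards with ξ
      apply Continuous.continuousAt
      fun_prop
  -- value at 0
  have hval : (∫ ξ in Set.Ioi (0:ℝ),
      φ ξ * ((ξ / (2 * Real.sqrt (π * t ^ 3))) * Real.exp (-ξ ^ 2 / (4 * t)))) =
      ∫ ξ in Set.Ioi (0:ℝ), D 0 ξ := by
    apply integral_congr_ae
    filter_upwards with ξ
    rw [hD_def]
    have hsqrt : Real.sqrt (π * t ^ 3) = Real.sqrt (π * t) * t := by
      rw [show π * t ^ 3 = (π * t) * t ^ 2 by ring, Real.sqrt_mul hπt.le, Real.sqrt_sq ht.le]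
    have e1 : -((0:ℝ) - ξ) ^ 2 / (4 * t) = -ξ^2/(4*t) := by ring
    have e2 : -((0:ℝ) + ξ) ^ 2 / (4 * t) = -ξ^2/(4*t) := by ring
    simp only [e1, e2, hsqrt, hc_def]
    have ht' : t ≠ 0 := ht.ne'
    have hs' : Real.sqrt (π * t) ≠ 0 := hs.ne'
    field_simp
    ring
  rw [hval]
  apply Tendsto.congr' _ (hCONT.tendsto.mono_left nhdsWithin_le_nhds)
  filter_upwards [Ioo_mem_nhdsGT_of_mem (Set.mem_Ico.mpr ⟨le_refl (0:ℝ), one_pos⟩)] with x hx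
  have hx1 : |x| ≤ 1 := by
    rw [abs_le]; constructor <;> [linarith [hx.1]; linarith [hx.2]]
  exact ((hDERIV x hx1).deriv).symm
end

section
/- Let s > 0. Then the Laplace transform in t of the function t ↦ e^{-ξ²/(4t)}/√(πt) (for ξ > 0) equals e^{-ξ√s}/√s, i.e., ∫₀^∞ e^{-st} · e^{-ξ²/(4t)}/√(πt) dt = e^{-ξ√s}/√s. -/
open Real MeasureTheory Set

-- image of u ↦ p*u - q/u over Ioi 0 is univ
lemma img_univ {p q : ℝ} (hp : 0 < p) (hq : 0 < q) :
    (fun u => p * u - q / u) '' Ioi 0 = univ := by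
  apply eq_univ_of_forall
  intro w
  set S := Real.sqrt (w ^ 2 + 4 * p * q) with hS
  have hS2 : S ^ 2 = w ^ 2 + 4 * p * q := Real.sq_sqrt (by positivity)
  have hSw : -w < S := by
    nlinarith [Real.sqrt_nonneg (w ^ 2 + 4 * p * q), abs_nonneg w, sq_abs w,
      neg_abs_le w, le_abs_self w]
  set u := (w + S) / (2 * p) with hu
  have hupos : 0 < u := by
    apply div_pos _ (by positivity)
    linarith
  refine ⟨u, hupos, ?_⟩
  have hws : (0:ℝ) < w + S := by linarith
  show p * u - q / u = w
  rw [hu]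
  have h1 : (2*p) ≠ 0 := by positivity
  have h2 : w + S ≠ 0 := ne_of_gt hws
  field_simp
  nlinarith [hS2]

lemma inj_f {p q : ℝ} (hp : 0 < p) (hq : 0 < q) :
    InjOn (fun u => p * u - q / u) (Ioi 0) := by
  have : StrictMonoOn (fun u => p * u - q / u) (Ioi 0) := by
    intro u hu v hv huv
    simp only [mem_Ioi] at hu hv
    have h1 : p * u < p * v := by nlinarith
    have h2 : q / v < q / u := div_lt_div_of_pos_left hq hu huv
    simp only
    linarith
  exact this.injOn

lemma img_inv {c : ℝ} (hc : 0 < c) : (fun u => c / u) '' Ioi 0 = Ioi 0 := by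
  ext y
  constructor
  · rintro ⟨u, hu, rfl⟩
    exact div_pos hc hu
  · intro hy
    exact ⟨c / y, div_pos hc hy, by field_simp⟩

lemma inj_inv {c : ℝ} (hc : 0 < c) : InjOn (fun u => c / u) (Ioi 0) := by
  intro u hu v hv h
  simp only [mem_Ioi] at hu hv
  have : c / u = c / v := h
  rw [div_eq_div_iff (ne_of_gt hu) (ne_of_gt hv)] at this
  exact mul_left_cancel₀ (ne_of_gt hc) (by linarith)

lemma glasser {a b : ℝ} (ha : 0 < a) (hb : 0 < b) :
    ∫ u in Ioi (0:ℝ), Real.exp (-(a * u ^ 2 + b / u ^ 2))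
      = Real.sqrt π / (2 * Real.sqrt a) * Real.exp (-2 * Real.sqrt (a * b)) := by
  set p := Real.sqrt a with hpdef
  set q := Real.sqrt b with hqdef
  have hp : 0 < p := Real.sqrt_pos.mpr ha
  have hq : 0 < q := Real.sqrt_pos.mpr hb
  have hp2 : p ^ 2 = a := Real.sq_sqrt ha.le
  have hq2 : q ^ 2 = b := Real.sq_sqrt hb.le
  have hpq : p * q = Real.sqrt (a * b) := (Real.sqrt_mul ha.le b).symm
  set E : ℝ → ℝ := fun u => Real.exp (-(a * u ^ 2 + b / u ^ 2)) with hE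
  -- integrability of E on Ioi 0
  have hEint : IntegrableOn E (Ioi 0) := by
    apply Integrable.mono' ((integrable_exp_neg_mul_sq ha).integrableOn)
    · apply Measurable.aestronglyMeasurable
      measurability
    · filter_upwards [ae_restrict_mem measurableSet_Ioi] with u hu
      simp only [mem_Ioi] at hu
      rw [Real.norm_eq_abs, abs_of_pos (Real.exp_pos _)]
      apply Real.exp_le_exp.mpr
      have : 0 ≤ b / u ^ 2 := by positivity
      linarith
  -- substitution u ↦ c/u : shows ∫ (q/u²) E = p * J
  set c := q / p with hcdef
  have hc : 0 < c := by positivity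
  have hderinv : ∀ u ∈ Ioi (0:ℝ), HasDerivWithinAt (fun u => c / u) (-(c / u ^ 2)) (Ioi 0) u := by
    intro u hu
    have hu0 : u ≠ 0 := ne_of_gt hu
    have : HasDerivAt (fun u => c / u) (-(c / u ^ 2)) u := by
      simpa [div_eq_mul_inv, mul_neg] using (hasDerivAt_inv hu0).const_mul c
    exact this.hasDerivWithinAt
  have hc2 : a * c ^ 2 = b := by
    rw [hcdef, div_pow, hq2, hp2]
    field_simp
  have hEc : ∀ u ∈ Ioi (0:ℝ), E (c / u) = E u := by
    intro u hu
    simp only [mem_Ioi] at hu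
    have hu0 : u ≠ 0 := ne_of_gt hu
    have e1 : a * (c / u) ^ 2 = b / u ^ 2 := by rw [div_pow, ← hc2]; ring
    have e2 : b / (c / u) ^ 2 = a * u ^ 2 := by
      rw [div_pow, ← hc2]
      field_simp
    simp only [hE]
    rw [e1, e2]
    ring_nf
  have hsub : ∫ u in Ioi (0:ℝ), E u = ∫ u in Ioi (0:ℝ), (c / u ^ 2) * E u := by
    calc ∫ u in Ioi (0:ℝ), E u = ∫ u in (fun u => c / u) '' Ioi 0, E u := by rw [img_inv hc]
      _ = ∫ u in Ioi (0:ℝ), |(-(c / u ^ 2))| • E (c / u) :=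
          integral_image_eq_integral_abs_deriv_smul measurableSet_Ioi hderinv (inj_inv hc) E
      _ = ∫ u in Ioi (0:ℝ), (c / u ^ 2) * E u := by
          apply setIntegral_congr_fun measurableSet_Ioi
          intro u hu
          have hu' : (0:ℝ) < u := hu
          show |(-(c / u ^ 2))| • E (c / u) = c / u ^ 2 * E u
          rw [hEc u hu, smul_eq_mul, abs_neg, abs_of_pos (by positivity)]
  have hKint : IntegrableOn (fun u => (c / u ^ 2) * E u) (Ioi 0) := by
    have := (integrableOn_image_iff_integrableOn_abs_deriv_smul measurableSet_Ioi hderinv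
      (inj_inv hc) E).mp (by rw [img_inv hc]; exact hEint)
    apply this.congr_fun _ measurableSet_Ioi
    intro u hu
    have hu' : (0:ℝ) < u := hu
    show |(-(c / u ^ 2))| • E (c / u) = c / u ^ 2 * E u
    rw [hEc u hu, smul_eq_mul, abs_neg, abs_of_pos (by positivity)]
  -- substitution w = p u - q/u
  have hder : ∀ u ∈ Ioi (0:ℝ),
      HasDerivWithinAt (fun u => p * u - q / u) (p + q / u ^ 2) (Ioi 0) u := by
    intro u hu
    have hu0 : u ≠ 0 := ne_of_gt hu
    have : HasDerivAt (fun u => p * u - q / u) (p + q / u ^ 2) u := by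
      have h : HasDerivAt (fun y => p * y - q * y⁻¹) (p * 1 - q * -(u ^ 2)⁻¹) u :=
        ((hasDerivAt_id u).const_mul p).sub ((hasDerivAt_inv hu0).const_mul q)
      simp only [div_eq_mul_inv]
      convert h using 1
      ring
    exact this.hasDerivWithinAt
  have hgauss : Real.sqrt π = ∫ u in Ioi (0:ℝ),
      |p + q / u ^ 2| • Real.exp (-(p * u - q / u) ^ 2) := by
    have hg1 : (∫ x : ℝ, Real.exp (-x ^ 2)) = Real.sqrt π := by
      simpa using integral_gaussian 1
    rw [← hg1, ← setIntegral_univ, ← img_univ hp hq]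
    exact integral_image_eq_integral_abs_deriv_smul measurableSet_Ioi hder (inj_f hp hq) _
  have hpoint : ∀ u ∈ Ioi (0:ℝ), |p + q / u ^ 2| • Real.exp (-(p * u - q / u) ^ 2)
      = Real.exp (2 * Real.sqrt (a * b)) * ((p + q / u ^ 2) * E u) := by
    intro u hu
    have hu' : (0:ℝ) < u := hu
    have hu0 : u ≠ 0 := ne_of_gt hu'
    rw [smul_eq_mul, abs_of_pos (by positivity)]
    have hexp : -(p * u - q / u) ^ 2 = 2 * Real.sqrt (a * b) + -(a * u ^ 2 + b / u ^ 2) := by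
      rw [← hpq, ← hp2, ← hq2]
      field_simp
      ring
    rw [hexp, Real.exp_add, hE]
    ring
  have hT : Real.sqrt π = Real.exp (2 * Real.sqrt (a * b)) *
      ∫ u in Ioi (0:ℝ), (p + q / u ^ 2) * E u := by
    rw [hgauss, setIntegral_congr_fun measurableSet_Ioi hpoint, integral_const_mul]
  -- split the integral
  have hsplit : ∫ u in Ioi (0:ℝ), (p + q / u ^ 2) * E u
      = p * (∫ u in Ioi (0:ℝ), E u) + p * ∫ u in Ioi (0:ℝ), (c / u ^ 2) * E u := by
    rw [← integral_const_mul, ← integral_const_mul, ← integral_add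
      (hEint.const_mul p) (hKint.const_mul p)]
    apply setIntegral_congr_fun measurableSet_Ioi
    intro u hu
    have hu' : (0:ℝ) < u := hu
    have hpc : p * c = q := by rw [hcdef]; field_simp
    show (p + q / u ^ 2) * E u = p * E u + p * (c / u ^ 2 * E u)
    rw [← hpc]
    ring
  set J := ∫ u in Ioi (0:ℝ), E u with hJ
  have h2pJ : Real.sqrt π = Real.exp (2 * Real.sqrt (a * b)) * (2 * p * J) := by
    rw [hT, hsplit, ← hsub]
    ring
  have hep : Real.exp (2 * Real.sqrt (a * b)) ≠ 0 := Real.exp_ne_zero _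
  have : J = Real.sqrt π / (2 * p) * (Real.exp (2 * Real.sqrt (a * b)))⁻¹ := by
    field_simp at h2pJ ⊢
    linarith [h2pJ]
  rw [this, ← Real.exp_neg]
  ring_nf

theorem stmt14 (s ξ : ℝ) (hs : 0 < s) (hξ : 0 < ξ) :
    ∫ t in Set.Ioi (0:ℝ),
        Real.exp (-s * t) * (Real.exp (-ξ ^ 2 / (4 * t)) / Real.sqrt (π * t))
      = Real.exp (-ξ * Real.sqrt s) / Real.sqrt s := by
  set g : ℝ → ℝ := fun t => Real.exp (-s * t) * (Real.exp (-ξ ^ 2 / (4 * t)) / Real.sqrt (π * t))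
    with hg
  have himg : (fun u : ℝ => u ^ 2) '' Ioi 0 = Ioi 0 := by
    ext y
    constructor
    · rintro ⟨u, hu, rfl⟩
      exact pow_pos (mem_Ioi.mp hu) 2
    · intro hy
      exact ⟨Real.sqrt y, Real.sqrt_pos.mpr hy, Real.sq_sqrt (le_of_lt hy)⟩
  have hinj : InjOn (fun u : ℝ => u ^ 2) (Ioi 0) := by
    have : StrictMonoOn (fun u : ℝ => u ^ 2) (Ioi 0) := by
      intro u hu v hv huv
      simp only [mem_Ioi] at hu hv
      show u ^ 2 < v ^ 2
      nlinarith
    exact this.injOn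
  have hder : ∀ u ∈ Ioi (0:ℝ), HasDerivWithinAt (fun u : ℝ => u ^ 2) (2 * u) (Ioi 0) u := by
    intro u hu
    have : HasDerivAt (fun u : ℝ => u ^ 2) (2 * u) u := by
      simpa using hasDerivAt_pow 2 u
    exact this.hasDerivWithinAt
  have key : ∫ t in Ioi (0:ℝ), g t
      = ∫ u in Ioi (0:ℝ), (2 / Real.sqrt π) * Real.exp (-(s * u ^ 2 + (ξ ^ 2 / 4) / u ^ 2)) := by
    calc ∫ t in Ioi (0:ℝ), g t = ∫ t in (fun u : ℝ => u ^ 2) '' Ioi 0, g t := by rw [himg]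
      _ = ∫ u in Ioi (0:ℝ), |2 * u| • g (u ^ 2) :=
          integral_image_eq_integral_abs_deriv_smul measurableSet_Ioi hder hinj g
      _ = _ := by
          apply setIntegral_congr_fun measurableSet_Ioi
          intro u hu
          have hu' : (0:ℝ) < u := hu
          show |2 * u| • g (u ^ 2)
            = (2 / Real.sqrt π) * Real.exp (-(s * u ^ 2 + (ξ ^ 2 / 4) / u ^ 2))
          rw [smul_eq_mul, abs_of_pos (by positivity), hg]
          simp only
          rw [show π * u ^ 2 = (Real.sqrt π * u) ^ 2 by
            rw [mul_pow, Real.sq_sqrt Real.pi_pos.le],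
            Real.sqrt_sq (by positivity)]
          rw [show -(s * u ^ 2 + ξ ^ 2 / 4 / u ^ 2) = -s * u ^ 2 + -ξ ^ 2 / (4 * u ^ 2) by
            field_simp; ring, Real.exp_add]
          have h2 : Real.sqrt π > 0 := Real.sqrt_pos.mpr Real.pi_pos
          field_simp
  rw [key, integral_const_mul, glasser hs (by positivity : (0:ℝ) < ξ ^ 2 / 4)]
  have h3 : Real.sqrt (s * (ξ ^ 2 / 4)) = Real.sqrt s * (ξ / 2) := by
    rw [Real.sqrt_mul hs.le, show ξ ^ 2 / 4 = (ξ / 2) ^ 2 by ring,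
      Real.sqrt_sq (by positivity)]
  rw [h3]
  have h4 : -2 * (Real.sqrt s * (ξ / 2)) = -ξ * Real.sqrt s := by ring
  rw [h4]
  have h2 : Real.sqrt π > 0 := Real.sqrt_pos.mpr Real.pi_pos
  have h5 : Real.sqrt s > 0 := Real.sqrt_pos.mpr hs
  field_simp
end

section
/- For q < 1/2 and fixed t > 0, writing σ = ε^{1-2q}, the boundary flux of the solution satisfies ∂_y p(t,0⁺;ε) = ∫₀^∞ (√σ (p₀(ξ) - p₀(-√σ ξ))/(1+√σ)) · (ξ/(2√(πt³))) e^{-ξ²/(4t)} dξ, and consequently |∂_y p(t,0⁺;ε)| ≤ 2‖p₀‖_∞ · (√σ/(1+√σ)) · ∫₀^∞ (ξ/(2√(πt³))) e^{-ξ²/(4t)} dξ = 2‖p₀‖_∞ √σ/((1+√σ)√(πt)) = O(ε^{1/2 - q}) as ε → 0⁺. -/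
open Real MeasureTheory intervalIntegral

lemma gauss_moment_one {b : ℝ} (hb : 0 < b) :
    ∫ x in Set.Ioi (0:ℝ), x * Real.exp (-b * x ^ 2) = (2 * b)⁻¹ := by
  have hb' : (2:ℝ) * b ≠ 0 := by positivity
  have A : ∀ x : ℝ, HasDerivAt (fun x : ℝ => -(2 * b)⁻¹ * Real.exp (-b * x ^ 2))
      (x * Real.exp (-b * x ^ 2)) x := by
    intro x
    convert ((hasDerivAt_pow 2 x).const_mul (-b)).exp.const_mul (-(2 * b)⁻¹) using 1
    · rfl
    · rfl
    field_simp
    ring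
  have B : Filter.Tendsto (fun y : ℝ => -(2 * b)⁻¹ * Real.exp (-b * y ^ 2))
      Filter.atTop (nhds (-(2 * b)⁻¹ * 0)) := by
    refine Filter.Tendsto.const_mul _ ?_
    refine Real.tendsto_exp_atBot.comp ?_
    exact (Filter.tendsto_pow_atTop two_ne_zero).const_mul_atTop_of_neg (neg_lt_zero.2 hb)
  have := integral_Ioi_of_hasDerivAt_of_tendsto' (f := fun x : ℝ => -(2 * b)⁻¹ * Real.exp (-b * x ^ 2))
    (f' := fun x : ℝ => x * Real.exp (-b * x ^ 2)) (a := 0)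
    (fun x _ => A x) (integrable_mul_exp_neg_mul_sq hb).integrableOn B
  rw [this]
  simp

theorem stmt18 (q t : ℝ) (hq : q < 1 / 2) (ht : 0 < t)
    (p0 : ℝ → ℝ) (hm : Measurable p0) (M : ℝ) (hM : 0 ≤ M) (hbdd : ∀ x, |p0 x| ≤ M)
    (h : ℝ → ℝ → ℝ) (flux : ℝ → ℝ)
    (hflux : ∀ ε > (0:ℝ), flux ε =
        (∫ ξ in Set.Ioi (0:ℝ), p0 ξ * ξ / (2 * Real.sqrt (π * t ^ 3)) * Real.exp (-ξ ^ 2 / (4 * t)))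
        - (∫ τ in (0:ℝ)..t, deriv (h ε) τ / Real.sqrt (π * (t - τ)))
        - h ε 0 / Real.sqrt (π * t))
    (hAbel : ∀ ε > (0:ℝ),
        (∫ τ in (0:ℝ)..t, deriv (h ε) τ / Real.sqrt (π * (t - τ))) + h ε 0 / Real.sqrt (π * t)
          = ∫ ξ in Set.Ioi (0:ℝ),
              ((p0 ξ + Real.sqrt (ε ^ (1 - 2 * q)) * p0 (-Real.sqrt (ε ^ (1 - 2 * q)) * ξ)) /
                  (1 + Real.sqrt (ε ^ (1 - 2 * q)))) *
                (ξ / (2 * Real.sqrt (π * t ^ 3)) * Real.exp (-ξ ^ 2 / (4 * t)))) :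
    (∀ ε > (0:ℝ), flux ε =
        ∫ ξ in Set.Ioi (0:ℝ),
          (Real.sqrt (ε ^ (1 - 2 * q)) * (p0 ξ - p0 (-Real.sqrt (ε ^ (1 - 2 * q)) * ξ)) /
              (1 + Real.sqrt (ε ^ (1 - 2 * q)))) *
            (ξ / (2 * Real.sqrt (π * t ^ 3)) * Real.exp (-ξ ^ 2 / (4 * t)))) ∧
    (∀ ε > (0:ℝ), |flux ε| ≤
        2 * M * Real.sqrt (ε ^ (1 - 2 * q)) /
          ((1 + Real.sqrt (ε ^ (1 - 2 * q))) * Real.sqrt (π * t))) ∧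
    (∃ C ε₀ : ℝ, 0 < C ∧ 0 < ε₀ ∧ ∀ ε : ℝ, 0 < ε → ε < ε₀ →
        |flux ε| ≤ C * ε ^ (1 / 2 - q)) := by
  have hb4 : (0:ℝ) < (4 * t)⁻¹ := by positivity
  set A : ℝ := Real.sqrt (π * t ^ 3) with hA
  have hA_pos : 0 < A := Real.sqrt_pos.mpr (by positivity)
  have hπt : (0:ℝ) < Real.sqrt (π * t) := Real.sqrt_pos.mpr (by positivity)
  set g : ℝ → ℝ := fun ξ => ξ / (2 * A) * Real.exp (-ξ ^ 2 / (4 * t)) with hg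
  have hexp_eq : ∀ ξ : ℝ, Real.exp (-ξ ^ 2 / (4 * t)) = Real.exp (-(4 * t)⁻¹ * ξ ^ 2) := by
    intro ξ; congr 1; field_simp
  have hg_int : IntegrableOn g (Set.Ioi 0) := by
    have : g = fun ξ => (2 * A)⁻¹ * (ξ * Real.exp (-(4 * t)⁻¹ * ξ ^ 2)) := by
      funext ξ; rw [hg]; simp only [hexp_eq ξ]; ring
    rw [this]
    exact ((integrable_mul_exp_neg_mul_sq hb4).const_mul _).integrableOn
  have hg_meas : Measurable g := by
    apply Measurable.mul
    · exact measurable_id.div_const _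
    · exact ((measurable_id.pow_const 2).neg.div_const _).exp
  have hg_val : ∫ ξ in Set.Ioi (0:ℝ), g ξ = (Real.sqrt (π * t))⁻¹ := by
    have : ∫ ξ in Set.Ioi (0:ℝ), g ξ
        = (2 * A)⁻¹ * ∫ ξ in Set.Ioi (0:ℝ), ξ * Real.exp (-(4 * t)⁻¹ * ξ ^ 2) := by
      rw [← MeasureTheory.integral_const_mul]
      refine setIntegral_congr_fun measurableSet_Ioi fun ξ _ => ?_
      rw [hg]; simp only [hexp_eq ξ]; ring
    rw [this, gauss_moment_one hb4]
    have hAsplit : A = Real.sqrt (π * t) * t := by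
      rw [hA, show π * t ^ 3 = π * t * t ^ 2 by ring,
        Real.sqrt_mul (by positivity) (t ^ 2), Real.sqrt_sq ht.le]
    rw [hAsplit]
    field_simp
    ring
  -- generic integrability lemma
  have key : ∀ (φ : ℝ → ℝ), Measurable φ → ∀ K : ℝ, (∀ x, |φ x| ≤ K) →
      IntegrableOn (fun ξ => φ ξ * g ξ) (Set.Ioi 0) := by
    intro φ hφ K hK
    refine Integrable.mono' (hg_int.const_mul K) ((hφ.mul hg_meas).aestronglyMeasurable) ?_
    filter_upwards [ae_restrict_mem (measurableSet_Ioi (a := (0:ℝ)))] with ξ hξ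
    have hgpos : 0 ≤ g ξ := by
      rw [hg]
      have : (0:ℝ) < ξ := hξ
      positivity
    rw [Real.norm_eq_abs, abs_mul, abs_of_nonneg hgpos]
    exact mul_le_mul_of_nonneg_right (hK ξ) hgpos
  -- Part 1
  have part1 : ∀ ε > (0:ℝ), flux ε =
      ∫ ξ in Set.Ioi (0:ℝ),
        (Real.sqrt (ε ^ (1 - 2 * q)) * (p0 ξ - p0 (-Real.sqrt (ε ^ (1 - 2 * q)) * ξ)) /
            (1 + Real.sqrt (ε ^ (1 - 2 * q)))) *
          (ξ / (2 * A) * Real.exp (-ξ ^ 2 / (4 * t))) := by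
    intro ε hε
    set s : ℝ := Real.sqrt (ε ^ (1 - 2 * q)) with hs
    have hs0 : 0 ≤ s := Real.sqrt_nonneg _
    have h1s : (0:ℝ) < 1 + s := by linarith
    have hφ1 : Measurable fun ξ : ℝ => p0 ξ := hm
    have hφ2 : Measurable fun ξ : ℝ => (p0 ξ + s * p0 (-s * ξ)) / (1 + s) :=
      (hm.add ((hm.comp (measurable_const.mul measurable_id)).const_mul s)).div_const _
    have hint1 : IntegrableOn (fun ξ => p0 ξ * g ξ) (Set.Ioi 0) :=
      key _ hφ1 M hbdd
    have hint2 : IntegrableOn (fun ξ => ((p0 ξ + s * p0 (-s * ξ)) / (1 + s)) * g ξ)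
        (Set.Ioi 0) := by
      refine key _ hφ2 M fun x => ?_
      rw [abs_div, abs_of_pos h1s, div_le_iff₀ h1s]
      calc |p0 x + s * p0 (-s * x)| ≤ |p0 x| + |s * p0 (-s * x)| := abs_add_le _ _
        _ ≤ M + s * M := by
            rw [abs_mul, abs_of_nonneg hs0]
            exact add_le_add (hbdd x) (mul_le_mul_of_nonneg_left (hbdd _) hs0)
        _ = M * (1 + s) := by ring
    have e1 : (∫ ξ in Set.Ioi (0:ℝ),
        p0 ξ * ξ / (2 * A) * Real.exp (-ξ ^ 2 / (4 * t)))
        = ∫ ξ in Set.Ioi (0:ℝ), p0 ξ * g ξ := by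
      refine setIntegral_congr_fun measurableSet_Ioi fun ξ _ => ?_
      rw [hg]; ring
    rw [hflux ε hε, sub_sub, hAbel ε hε, ← hs, e1, ← integral_sub hint1 hint2]
    refine setIntegral_congr_fun measurableSet_Ioi fun ξ _ => ?_
    rw [hg]
    have : p0 ξ - (p0 ξ + s * p0 (-s * ξ)) / (1 + s)
        = s * (p0 ξ - p0 (-s * ξ)) / (1 + s) := by
      field_simp
      ring
    calc p0 ξ * (ξ / (2 * A) * Real.exp (-ξ ^ 2 / (4 * t)))
          - (p0 ξ + s * p0 (-s * ξ)) / (1 + s) * (ξ / (2 * A) * Real.exp (-ξ ^ 2 / (4 * t)))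
        = (p0 ξ - (p0 ξ + s * p0 (-s * ξ)) / (1 + s))
            * (ξ / (2 * A) * Real.exp (-ξ ^ 2 / (4 * t))) := by ring
      _ = s * (p0 ξ - p0 (-s * ξ)) / (1 + s) * (ξ / (2 * A) * Real.exp (-ξ ^ 2 / (4 * t))) := by
          rw [this]
  -- Part 2
  have part2 : ∀ ε > (0:ℝ), |flux ε| ≤
      2 * M * Real.sqrt (ε ^ (1 - 2 * q)) /
        ((1 + Real.sqrt (ε ^ (1 - 2 * q))) * Real.sqrt (π * t)) := by
    intro ε hε
    set s : ℝ := Real.sqrt (ε ^ (1 - 2 * q)) with hs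
    have hs0 : 0 ≤ s := Real.sqrt_nonneg _
    have h1s : (0:ℝ) < 1 + s := by linarith
    rw [part1 ε hε]
    set c : ℝ := 2 * M * s / (1 + s) with hc
    have hc0 : 0 ≤ c := by positivity
    have hbound : ‖∫ ξ in Set.Ioi (0:ℝ),
        (s * (p0 ξ - p0 (-s * ξ)) / (1 + s)) * g ξ‖ ≤ ∫ ξ in Set.Ioi (0:ℝ), c * g ξ := by
      refine norm_integral_le_of_norm_le (hg_int.const_mul c) ?_
      filter_upwards [ae_restrict_mem (measurableSet_Ioi (a := (0:ℝ)))] with ξ hξ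
      have hgpos : 0 ≤ g ξ := by
        rw [hg]
        have : (0:ℝ) < ξ := hξ
        positivity
      rw [Real.norm_eq_abs, abs_mul, abs_of_nonneg hgpos]
      refine mul_le_mul_of_nonneg_right ?_ hgpos
      rw [abs_div, abs_of_pos h1s, hc, div_le_div_iff_of_pos_right h1s, abs_mul,
        abs_of_nonneg hs0]
      have : |p0 ξ - p0 (-s * ξ)| ≤ 2 * M := by
        calc |p0 ξ - p0 (-s * ξ)| ≤ |p0 ξ| + |p0 (-s * ξ)| := abs_sub _ _
          _ ≤ M + M := add_le_add (hbdd _) (hbdd _)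
          _ = 2 * M := by ring
      calc s * |p0 ξ - p0 (-s * ξ)| ≤ s * (2 * M) := mul_le_mul_of_nonneg_left this hs0
        _ = 2 * M * s := by ring
    rw [Real.norm_eq_abs] at hbound
    refine hbound.trans ?_
    rw [MeasureTheory.integral_const_mul, hg_val, hc]
    apply le_of_eq
    have h1 : (1:ℝ) + s ≠ 0 := h1s.ne'
    have h2 : Real.sqrt (π * t) ≠ 0 := hπt.ne'
    field_simp
  refine ⟨fun ε hε => by rw [part1 ε hε], part2, ?_⟩
  -- Part 3
  refine ⟨2 * M / Real.sqrt (π * t) + 1, 1, by positivity, one_pos, fun ε hε hε1 => ?_⟩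
  set s : ℝ := Real.sqrt (ε ^ (1 - 2 * q)) with hs
  have hs0 : 0 ≤ s := Real.sqrt_nonneg _
  have h1s : (0:ℝ) < 1 + s := by linarith
  have hs_eq : s = ε ^ (1 / 2 - q) := by
    rw [hs, Real.sqrt_eq_rpow, ← Real.rpow_mul hε.le]
    congr 1
    ring
  have hr0 : 0 ≤ ε ^ (1 / 2 - q) := Real.rpow_nonneg hε.le _
  refine (part2 ε hε).trans ?_
  rw [← hs, hs_eq]
  have step1 : 2 * M * ε ^ (1 / 2 - q) / ((1 + ε ^ (1 / 2 - q)) * Real.sqrt (π * t))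
      ≤ 2 * M * ε ^ (1 / 2 - q) / Real.sqrt (π * t) := by
    apply div_le_div_of_nonneg_left (by positivity) hπt
    nlinarith [Real.sqrt_nonneg (π * t)]
  refine step1.trans ?_
  have heq : 2 * M * ε ^ (1 / 2 - q) / Real.sqrt (π * t)
      = (2 * M / Real.sqrt (π * t)) * ε ^ (1 / 2 - q) := by ring
  rw [heq]
  exact mul_le_mul_of_nonneg_right (by linarith) hr0
end
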